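/- There exists an S-module homomorphism s from the ideal J to the quotient module S/I such that s(w_i) = g_i mod I for all i = 1, …, r+1. -/

import Mathlib

open Submodule Matrix

/-- Auxiliary: the linear "combination" map `a ↦ ∑ j, a j • u j`. -/
noncomputable def stmt1Combo {S : Type*} [CommRing S] {ι : Type*} [Fintype ι]
    {M : Type*} [AddCommGroup M] [Module S M] (u : ι → M) : (ι → S) →ₗ[S] M where
  toFun a := ∑ j, a j • u j
  map_add' a b := by simp [add_smul, Finset.sum_add_distrib]
  map_smul' c a := by simp [mul_smul, Finset.smul_sum]

lemma stmt1Combo_single {S : Type*} [CommRing S] {ι : Type*} [Fintype ι] [DecidableEq ι]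
    {M : Type*} [AddCommGroup M] [Module S M] (u : ι → M) (i : ι) (c : S) :
    stmt1Combo u (c • (Pi.single i 1 : ι → S)) = c • u i := by
  simp only [stmt1Combo, LinearMap.coe_mk, AddHom.coe_mk, Pi.smul_apply, Pi.single_apply,
    smul_eq_mul, mul_ite, mul_one, mul_zero, ite_smul, zero_smul]
  simp

lemma stmt1Combo_single' {S : Type*} [CommRing S] {ι : Type*} [Fintype ι] [DecidableEq ι]
    {M : Type*} [AddCommGroup M] [Module S M] (u : ι → M) (i : ι) :
    stmt1Combo u (Pi.single i 1 : ι → S) = u i := by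
  simp only [stmt1Combo, LinearMap.coe_mk, AddHom.coe_mk, Pi.single_apply, ite_smul, zero_smul]
  simp

/-- The matrix obtained by stacking the `i`-th standard basis row vector on top of `Q`. -/
noncomputable def stmt1N {S : Type*} [CommRing S] {r : ℕ}
    (Q : Matrix (Fin r) (Fin (r+1)) S) (i : Fin (r+1)) :
    Matrix (Fin (r+1)) (Fin (r+1)) S :=
  Matrix.of (Fin.cons (Pi.single i 1 : Fin (r+1) → S) (fun l => Q l))

lemma stmt1N_det {S : Type*} [CommRing S] {r : ℕ}
    (Q : Matrix (Fin r) (Fin (r+1)) S) (i : Fin (r+1)) :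
    (stmt1N Q i).det = (-1 : S) ^ (i : ℕ) * (Q.submatrix id i.succAbove).det := by
  rw [Matrix.det_succ_row_zero]
  rw [Finset.sum_eq_single i]
  · have h1 : stmt1N Q i 0 i = 1 := by simp [stmt1N]
    have h2 : (stmt1N Q i).submatrix Fin.succ i.succAbove = Q.submatrix id i.succAbove := by
      ext a b; simp [stmt1N, Matrix.submatrix]
    rw [h1, h2]; ring
  · intro j _ hj
    simp [stmt1N, Pi.single_apply, hj.symm]
  · simp

lemma stmt1N_mulVec {S : Type*} [CommRing S] {r : ℕ}
    (Q : Matrix (Fin r) (Fin (r+1)) S) (w : Fin (r+1) → S) (i : Fin (r+1)) :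
    (stmt1N Q i).mulVec w = Fin.cons (w i) (fun l => ∑ j, Q l j * w j) := by
  ext a
  refine Fin.cases ?_ ?_ a
  · simp [stmt1N, Matrix.mulVec, dotProduct, Pi.single_apply]
  · intro l
    simp [stmt1N, Matrix.mulVec, dotProduct]

lemma stmt1N_adj {S : Type*} [CommRing S] {r : ℕ}
    (Q : Matrix (Fin r) (Fin (r+1)) S) (i k : Fin (r+1)) :
    (stmt1N Q i).adjugate k 0 = (stmt1N Q k).det := by
  rw [Matrix.adjugate_apply]
  congr 1
  ext a b
  refine Fin.cases ?_ ?_ a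
  · simp [stmt1N]
  · intro l
    simp [stmt1N, Matrix.updateRow_ne (Fin.succ_ne_zero l)]

lemma stmt1_key {S : Type*} [CommRing S] {r : ℕ}
    (Q : Matrix (Fin r) (Fin (r+1)) S) (w : Fin (r+1) → S) (i k : Fin (r+1)) :
    (stmt1N Q i).det * w k - (stmt1N Q k).det * w i
      = ∑ l : Fin r, (stmt1N Q i).adjugate k l.succ * (∑ j, Q l j * w j) := by
  have h : ((stmt1N Q i).adjugate).mulVec ((stmt1N Q i).mulVec w) = (stmt1N Q i).det • w := by
    rw [Matrix.mulVec_mulVec, Matrix.adjugate_mul, Matrix.smul_mulVec, Matrix.one_mulVec]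
  have h2 := congrFun h k
  rw [stmt1N_mulVec] at h2
  simp only [Matrix.mulVec, dotProduct, Pi.smul_apply, smul_eq_mul] at h2
  rw [Fin.sum_univ_succ] at h2
  simp only [Fin.cons_zero, Fin.cons_succ, stmt1N_adj] at h2
  rw [sub_eq_iff_eq_add, ← h2]
  ring

/-- Syzygies of a "regular-ish" sequence lie in the span of the Koszul relations. -/
lemma stmt1_koszul {S : Type*} [CommRing S] {m : ℕ} (w : Fin m → S)
    (hreg : ∀ (k : Fin m) (b : S),
      b * w k ∈ Ideal.span (w '' {j | j < k}) → b ∈ Ideal.span (w '' {j | j < k})) :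
    ∀ (n : ℕ) (a : Fin m → S), (∀ j : Fin m, n ≤ (j : ℕ) → a j = 0) →
      (∑ j, a j * w j = 0) →
      a ∈ Submodule.span S {x : Fin m → S |
        ∃ i j, x = w i • (Pi.single j 1 : Fin m → S) - w j • (Pi.single i 1 : Fin m → S)} := by
  intro n
  induction n with
  | zero =>
    intro a ha _
    have : a = 0 := funext fun j => ha j (Nat.zero_le _)
    simp [this]
  | succ n ih =>
    intro a ha hsum
    by_cases hn : n < m
    case neg =>
      exact ih a (fun j hj => absurd (lt_of_lt_of_le j.2 (not_lt.mp hn)) (not_lt.mpr hj)) hsum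
    case pos =>
    set k : Fin m := ⟨n, hn⟩ with hk
    have h1 : a k * w k ∈ Ideal.span (w '' {j | j < k}) := by
      have h0 : a k * w k + ∑ j ∈ Finset.univ.erase k, a j * w j = 0 := by
        rw [Finset.add_sum_erase Finset.univ (fun j => a j * w j) (Finset.mem_univ k)]
        exact hsum
      have he : a k * w k = -∑ j ∈ Finset.univ.erase k, a j * w j := by
        linear_combination h0
      rw [he]
      refine neg_mem (Ideal.sum_mem _ fun j hj => ?_)
      have hjk : j ≠ k := Finset.ne_of_mem_erase hj
      rcases lt_trichotomy ((j : ℕ)) n with h | h | h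
      · exact Ideal.mul_mem_left _ _ (Ideal.subset_span ⟨j, h, rfl⟩)
      · exact absurd (Fin.ext h) hjk
      · rw [ha j h, zero_mul]; exact zero_mem _
    have hak := hreg k (a k) h1
    have hPr : Ideal.span (w '' {j | j < k})
        = Ideal.span (Set.range fun t : Fin n => w (Fin.castLE hn.le t)) := by
      congr 1
      ext x
      constructor
      · rintro ⟨j, hj, rfl⟩
        exact ⟨⟨(j : ℕ), hj⟩, by congr 1⟩
      · rintro ⟨t, rfl⟩
        exact ⟨Fin.castLE hn.le t, t.2, rfl⟩
    rw [hPr] at hak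
    have hak' : a k ∈ Submodule.span S (Set.range fun t : Fin n => w (Fin.castLE hn.le t)) := hak
    rw [mem_span_range_iff_exists_fun] at hak'
    obtain ⟨c, hc⟩ := hak'
    set K := Submodule.span S {x : Fin m → S |
        ∃ i j, x = w i • (Pi.single j 1 : Fin m → S) - w j • (Pi.single i 1 : Fin m → S)} with hK
    set d : Fin m → S := ∑ t : Fin n, c t •
        (w (Fin.castLE hn.le t) • (Pi.single k 1 : Fin m → S)
          - w k • (Pi.single (Fin.castLE hn.le t) 1 : Fin m → S)) with hd
    have hdK : d ∈ K := Submodule.sum_mem _ fun t _ =>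
      Submodule.smul_mem _ _ (Submodule.subset_span ⟨_, _, rfl⟩)
    have hsub : a - d ∈ K := by
      apply ih
      · intro j hj
        have hdj : d j = ∑ t : Fin n, c t *
            (w (Fin.castLE hn.le t) * (Pi.single k 1 : Fin m → S) j
              - w k * (Pi.single (Fin.castLE hn.le t) 1 : Fin m → S) j) := by
          rw [hd, Finset.sum_apply]
          simp [mul_sub]
        have hst : ∀ t : Fin n, (Pi.single (Fin.castLE hn.le t) (1:S) : Fin m → S) j = 0 := by
          intro t
          refine Pi.single_eq_of_ne ?_ _
          intro hjt
          have := congrArg Fin.val hjt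
          simp only [Fin.coe_castLE] at this
          omega
        have hkv : (k : ℕ) = n := rfl
        rcases eq_or_lt_of_le hj with h | h
        · have hjk : j = k := Fin.ext (by omega)
          have hsk : (Pi.single k (1:S) : Fin m → S) j = 1 := by
            rw [hjk]; exact Pi.single_eq_same k 1
          rw [Pi.sub_apply, hdj]
          simp only [hst, hsk, mul_zero, sub_zero, mul_one]
          rw [sub_eq_zero, hjk, ← hc]
          exact Finset.sum_congr rfl fun t _ => (smul_eq_mul _ _).symm
        · have hsk : (Pi.single k (1:S) : Fin m → S) j = 0 := by
            refine Pi.single_eq_of_ne ?_ _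
            intro hjk
            have := congrArg Fin.val hjk
            omega
          rw [Pi.sub_apply, hdj]
          simp [hst, hsk, ha j (by omega)]
      · have hds : ∑ j, d j * w j = 0 := by
          rw [hd]
          simp only [Finset.sum_apply, Pi.smul_apply, Pi.sub_apply, smul_eq_mul,
            Finset.sum_mul]
          rw [Finset.sum_comm]
          apply Finset.sum_eq_zero
          intro t _
          simp only [Pi.single_apply, mul_ite, ite_mul, mul_zero, zero_mul, mul_one,
            mul_sub, sub_mul, Finset.sum_sub_distrib, Finset.sum_ite_eq',
            Finset.mem_univ, if_true]
          ring
        simp only [Pi.sub_apply, sub_mul]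
        rw [Finset.sum_sub_distrib, hsum, hds, sub_zero]
    have := K.add_mem hsub hdK
    simpa using this

/-- Let `S` be a commutative Noetherian ring, `w_1, …, w_{r+1}` a
regular sequence in `S`, `Q` an `r × (r+1)` matrix, `v i = ∑ j, Q i j * w j`,
`I = (v_1, …, v_r)`, `J = (w_1, …, w_{r+1})`, and `g i` the signed maximal
minors of `Q`. Then there is an `S`-module homomorphism `s : J → S/I` with
`s (w i) = g i mod I` for all `i`. -/
theorem stmt_1 (S : Type*) [CommRing S] [IsNoetherianRing S] (r : ℕ) (hr : 1 ≤ r)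
    (w : Fin (r + 1) → S)
    (hreg : RingTheory.Sequence.IsRegular S (List.ofFn w))
    (Q : Matrix (Fin r) (Fin (r + 1)) S)
    (v : Fin r → S) (hv : ∀ i, v i = ∑ j, Q i j * w j)
    (I J : Ideal S)
    (hI : I = Ideal.span (Set.range v)) (hJ : J = Ideal.span (Set.range w))
    (g : Fin (r + 1) → S)
    (hg : ∀ i, g i = (-1 : S) ^ (i : ℕ) * (Q.submatrix id i.succAbove).det)
    (hwJ : ∀ i, w i ∈ J) :
    ∃ s : J →ₗ[S] (S ⧸ (I : Submodule S S)),
      ∀ i, s ⟨w i, hwJ i⟩ = Submodule.Quotient.mk (g i) := by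
  classical
  -- the regularity hypothesis, in elementwise form
  have hregP : ∀ (k : Fin (r+1)) (b : S),
      b * w k ∈ Ideal.span (w '' {j | j < k}) → b ∈ Ideal.span (w '' {j | j < k}) := by
    intro k b hb
    have hlen : (k : ℕ) < (List.ofFn w).length := by simpa using k.2
    have hsr := hreg.toIsWeaklyRegular.regular_mod_prev (k : ℕ) hlen
    have hset : {x | x ∈ (List.ofFn w).take (k : ℕ)} = w '' {j | j < k} := by
      ext x
      simp only [Set.mem_setOf_eq, List.mem_take_iff_getElem, List.length_ofFn,
        List.getElem_ofFn, Set.mem_image]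
      constructor
      · rintro ⟨i, hi, rfl⟩
        refine ⟨⟨i, by omega⟩, by simp [Fin.lt_def]; omega, rfl⟩
      · rintro ⟨j, hj, rfl⟩
        rw [Fin.lt_def] at hj
        exact ⟨(j : ℕ), by omega, rfl⟩
    have hIdeq : Ideal.ofList ((List.ofFn w).take (k : ℕ)) • (⊤ : Submodule S S)
        = (Ideal.span (w '' {j | j < k}) : Submodule S S) := by
      rw [Ideal.ofList, hset, Submodule.span_smul_eq, Submodule.set_smul_top_eq_span]
    have hget : (List.ofFn w)[(k : ℕ)] = w k := by
      rw [List.getElem_ofFn]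
    rw [hget] at hsr
    have h0 : w k • (Submodule.Quotient.mk b :
        S ⧸ (Ideal.ofList ((List.ofFn w).take (k : ℕ)) • (⊤ : Submodule S S))) = w k • 0 := by
      rw [smul_zero, ← Submodule.Quotient.mk_smul, Submodule.Quotient.mk_eq_zero, hIdeq]
      simpa [smul_eq_mul, mul_comm] using hb
    have h1 := hsr h0
    rw [Submodule.Quotient.mk_eq_zero, hIdeq] at h1
    exact h1
  -- the two combination maps
  set π : (Fin (r+1) → S) →ₗ[S] S := stmt1Combo w with hπdef
  set φ : (Fin (r+1) → S) →ₗ[S] (S ⧸ (I : Submodule S S)) :=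
    stmt1Combo (fun j => (Submodule.Quotient.mk (g j) : S ⧸ (I : Submodule S S))) with hφdef
  have hπ : ∀ a, π a = ∑ j, a j * w j := fun a => by
    simp [hπdef, stmt1Combo, smul_eq_mul]
  -- g i = det of the stacked matrix
  have hgdet : ∀ i, g i = (stmt1N Q i).det := fun i => by rw [hg i, stmt1N_det]
  -- key congruence
  have hkey : ∀ i j : Fin (r+1), g i * w j - g j * w i ∈ I := by
    intro i j
    have h := stmt1_key Q w i j
    rw [← hgdet, ← hgdet] at h
    rw [h, hI]
    refine Ideal.sum_mem _ fun l _ => Ideal.mul_mem_left _ _ ?_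
    rw [← hv l]
    exact Ideal.subset_span ⟨l, rfl⟩
  -- Koszul relations die under φ
  have hKospan : Submodule.span S {x : Fin (r+1) → S |
      ∃ i j, x = w i • (Pi.single j 1 : Fin (r+1) → S)
        - w j • (Pi.single i 1 : Fin (r+1) → S)} ≤ LinearMap.ker φ := by
    rw [Submodule.span_le]
    rintro x ⟨i, j, rfl⟩
    rw [SetLike.mem_coe, LinearMap.mem_ker, map_sub, hφdef, stmt1Combo_single,
      stmt1Combo_single]
    have e1 : ∀ x y : S, (Submodule.Quotient.mk (x * y) : S ⧸ (I : Submodule S S))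
        = x • Submodule.Quotient.mk y := fun x y => by
      rw [← smul_eq_mul, Submodule.Quotient.mk_smul]
    rw [← e1, ← e1, ← Submodule.Quotient.mk_sub, Submodule.Quotient.mk_eq_zero]
    have heq : w i * g j - w j * g i = g j * w i - g i * w j := by ring
    rw [heq]
    exact hkey j i
  -- kernel inclusion
  have hker : LinearMap.ker π ≤ LinearMap.ker φ := by
    intro a ha
    refine hKospan (stmt1_koszul w hregP (r+1) a (fun j hj => absurd j.2 (by omega)) ?_)
    rw [← hπ a]
    exact ha
  -- range of π is J
  have hrange : LinearMap.range π = (J : Submodule S S) := by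
    apply le_antisymm
    · rintro _ ⟨a, rfl⟩
      rw [hπ a]
      refine Submodule.sum_mem _ fun j _ => ?_
      rw [hJ]
      exact Ideal.mul_mem_left _ _ (Ideal.subset_span ⟨j, rfl⟩)
    · have : (J : Submodule S S) = Submodule.span S (Set.range w) := by rw [hJ]
      rw [this, Submodule.span_le]
      rintro _ ⟨i, rfl⟩
      exact ⟨Pi.single i 1, by rw [hπdef, stmt1Combo_single']⟩
  let s : J →ₗ[S] (S ⧸ (I : Submodule S S)) :=
    (Submodule.liftQ (LinearMap.ker π) φ hker) ∘ₗ π.quotKerEquivRange.symm.toLinearMap ∘ₗ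
      (LinearEquiv.ofEq (J : Submodule S S) (LinearMap.range π) hrange.symm).toLinearMap
  refine ⟨s, fun i => ?_⟩
  have h2 : π.quotKerEquivRange (Submodule.Quotient.mk (Pi.single i 1 : Fin (r+1) → S))
      = (LinearEquiv.ofEq (J : Submodule S S) (LinearMap.range π) hrange.symm) ⟨w i, hwJ i⟩ := by
    refine Subtype.ext ?_
    rw [LinearMap.quotKerEquivRange_apply_mk]
    simp only [LinearEquiv.coe_ofEq_apply]
    rw [hπdef, stmt1Combo_single']
  have h3 : π.quotKerEquivRange.symm
      ((LinearEquiv.ofEq (J : Submodule S S) (LinearMap.range π) hrange.symm)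
      ⟨w i, hwJ i⟩) = Submodule.Quotient.mk (Pi.single i 1 : Fin (r+1) → S) := by
    rw [← h2, LinearEquiv.symm_apply_apply]
  show (Submodule.liftQ (LinearMap.ker π) φ hker) (π.quotKerEquivRange.symm
    ((LinearEquiv.ofEq (J : Submodule S S) (LinearMap.range π) hrange.symm) ⟨w i, hwJ i⟩))
    = Submodule.Quotient.mk (g i)
  rw [h3, Submodule.liftQ_apply, hφdef, stmt1Combo_single']
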